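/- Let λ = [λ_1, …, λ_n] ∈ ℂ^n and let w ∈ W^p have LS word with digit 1 exactly at positions i_1 < ⋯ < i_k. Then the standard Weyl group action of w on λ (acting by signed permutations of coordinates) yields the n-tuple obtained by deleting the coordinates λ_{i_1}, …, λ_{i_k} from λ, keeping the remaining coordinates in order, and appending −λ_{i_k}, −λ_{i_{k−1}}, …, −λ_{i_1} at the end. -/

import Mathlib

namespace Stmt4

/-- The reflection `σ_{ε_i + ε_j}` of the Weyl group of `sp(2n, ℂ)` acting on coordinate
tuples: it swaps coordinates `i` and `j` and negates them both.  For `i = j` this is the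
reflection `σ_{2ε_i}`, negating the `i`-th coordinate. -/
def reflC (i j : ℕ) (f : ℕ → ℂ) : ℕ → ℂ :=
  fun t => if t = i then -f j else if t = j then -f i else f t

/-- The column `σ_{ε_{col-m}+ε_col} ∘ ⋯ ∘ σ_{ε_{col-1}+ε_col} ∘ σ_{2ε_col}`
(the reflection in `2ε_col` is applied first). -/
def colStack (col : ℕ) : ℕ → (ℕ → ℂ) → (ℕ → ℂ)
  | 0 => reflC col col
  | m + 1 => fun f => reflC (col - (m + 1)) col (colStack col m f)

/-- The element of the Weyl group attached to an LS word with ones at positions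
`I 1 < I 2 < ⋯ < I k`: the composition `C_k ∘ ⋯ ∘ C_1` of the columns
`C_j = σ_{ε_{I j - j + 1} + ε_{n+1-j}} ∘ ⋯ ∘ σ_{ε_{n-j} + ε_{n+1-j}} ∘ σ_{2ε_{n+1-j}}`. -/
def wordProd (I : ℕ → ℕ) (n : ℕ) : ℕ → (ℕ → ℂ) → (ℕ → ℂ)
  | 0 => id
  | j + 1 => fun f => colStack (n - j) ((n - j) - (I (j + 1) - j)) (wordProd I n j f)

lemma colStack_spec (col : ℕ) (f : ℕ → ℂ) :
    ∀ m, m < col → ∀ t, colStack col m f t =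
      if col - m ≤ t ∧ t ≤ col - 1 then f (t + 1)
      else if t = col then -f (col - m) else f t := by
  intro m
  induction m with
  | zero =>
    intro hm t
    simp only [colStack, reflC, Nat.sub_zero]
    rw [if_neg (by omega : ¬ (col ≤ t ∧ t ≤ col - 1))]
    by_cases h : t = col <;> simp [h]
  | succ m ih =>
    intro hm t
    simp only [colStack, reflC]
    by_cases h1 : t = col - (m + 1)
    · rw [if_pos h1, ih (by omega) col,
        if_neg (by omega : ¬ (col - m ≤ col ∧ col ≤ col - 1)), if_pos rfl, neg_neg,
        if_pos (by omega : col - (m+1) ≤ t ∧ t ≤ col - 1)]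
      congr 1
      omega
    · rw [if_neg h1]
      by_cases h2 : t = col
      · rw [if_pos h2, ih (by omega) (col - (m+1)),
          if_neg (by omega : ¬ (col - m ≤ col - (m+1) ∧ col - (m+1) ≤ col - 1)),
          if_neg (by omega : ¬ (col - (m+1) = col)),
          if_neg (by omega : ¬ (col - (m+1) ≤ t ∧ t ≤ col - 1)), if_pos h2]
      · rw [if_neg h2, ih (by omega) t]
        by_cases h3 : col - m ≤ t ∧ t ≤ col - 1
        · rw [if_pos h3, if_pos (by omega : col - (m+1) ≤ t ∧ t ≤ col - 1)]
        · rw [if_neg h3, if_neg h2, if_neg (by omega : ¬ (col - (m+1) ≤ t ∧ t ≤ col - 1)),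
            if_neg h2]

lemma orderEmb_index {s : Finset ℕ} {N : ℕ} (h : s.card = N) (b : Fin N) :
    (s.filter (fun x => x < s.orderEmbOfFin h b)).card = b.val := by
  have himg : s.filter (fun x => x < s.orderEmbOfFin h b)
      = (Finset.Iio b).image (s.orderEmbOfFin h) := by
    ext x
    simp only [Finset.mem_filter, Finset.mem_image, Finset.mem_Iio]
    constructor
    · rintro ⟨hxs, hxlt⟩
      have hx : x ∈ Set.range (s.orderEmbOfFin h) := by
        rw [Finset.range_orderEmbOfFin]; exact hxs
      obtain ⟨i, hi⟩ := hx
      refine ⟨i, ?_, hi⟩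
      rw [← hi] at hxlt
      exact (s.orderEmbOfFin h).lt_iff_lt.mp hxlt
    · rintro ⟨i, hib, rfl⟩
      exact ⟨Finset.orderEmbOfFin_mem s h i, (s.orderEmbOfFin h).strictMono hib⟩
  rw [himg, Finset.card_image_of_injective _ (s.orderEmbOfFin h).injective, Fin.card_Iio]

lemma orderEmbOfFin_congr {s t : Finset ℕ} {N : ℕ} (h : s = t) (hs : s.card = N)
    (ht : t.card = N) (x : Fin N) : s.orderEmbOfFin hs x = t.orderEmbOfFin ht x := by
  subst h; rfl

/-- totalization of `F` -/
def FFgen (n k : ℕ) (F : Fin k → ℕ) (i : ℕ) : ℕ := if h : i < k then F ⟨i, h⟩ else n + 1 + i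

/-- `Icc 1 n` with the first `j` values of `F` removed -/
def Sgen (n k : ℕ) (F : Fin k → ℕ) (j : ℕ) : Finset ℕ :=
  Finset.Icc 1 n \ (Finset.range j).image (FFgen n k F)

lemma Sgen_card (n k : ℕ) (F : Fin k → ℕ) (hmono : StrictMono F)
    (hmem : ∀ i, F i ∈ Finset.Icc 1 n) (j : ℕ) (hj : j ≤ k) :
    (Sgen n k F j).card = n - j := by
  have hsub : (Finset.range j).image (FFgen n k F) ⊆ Finset.Icc 1 n := by
    intro x hx
    obtain ⟨i, hi, rfl⟩ := Finset.mem_image.mp hx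
    have hik : i < k := lt_of_lt_of_le (Finset.mem_range.mp hi) hj
    simpa [FFgen, hik] using hmem ⟨i, hik⟩
  have hcardimg : ((Finset.range j).image (FFgen n k F)).card = j := by
    rw [Finset.card_image_of_injOn, Finset.card_range]
    intro x hx y hy hxy
    simp only [Finset.coe_range, Set.mem_Iio] at hx hy
    have hxk : x < k := lt_of_lt_of_le hx hj
    have hyk : y < k := lt_of_lt_of_le hy hj
    simp only [FFgen, dif_pos hxk, dif_pos hyk] at hxy
    simpa using congrArg Fin.val (hmono.injective hxy)
  rw [Sgen, Finset.card_sdiff_of_subset hsub, hcardimg, Nat.card_Icc]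
  omega

lemma main_induction (n k : ℕ) (hkn : k ≤ n) (F : Fin k → ℕ) (lam : ℕ → ℂ)
    (hmono : StrictMono F) (hmem : ∀ i, F i ∈ Finset.Icc 1 n)
    (I : ℕ → ℕ) (hI : ∀ i : Fin k, I (i.val + 1) = F i) :
    ∀ j, j ≤ k → ∀ hc : (Sgen n k F j).card = n - j,
      (∀ t : Fin (n - j),
          wordProd I n j lam (t.val + 1) = lam ((Sgen n k F j).orderEmbOfFin hc t)) ∧
      (∀ s, 1 ≤ s → s ≤ j →
          wordProd I n j lam (n - j + s) = -lam (FFgen n k F (j - s))) := by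
  have hFge' : ∀ m, (h : m < k) → m + 1 ≤ F ⟨m, h⟩ := by
    intro m
    induction m with
    | zero => intro h; exact (Finset.mem_Icc.mp (hmem ⟨0, h⟩)).1
    | succ m ihm =>
      intro h
      have h' : m < k := by omega
      have hlt : F ⟨m, h'⟩ < F ⟨m + 1, h⟩ := hmono (by simp)
      have := ihm h'
      omega
  have hFge : ∀ i : Fin k, i.val + 1 ≤ F i := by
    intro i
    have := hFge' i.val i.isLt
    simpa using this
  intro j
  induction j with
  | zero =>
    intro hj hc
    constructor
    · intro t
      have hfun : (fun t : Fin (n - 0) => t.val + 1) = ⇑((Sgen n k F 0).orderEmbOfFin hc) := by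
        apply Finset.orderEmbOfFin_unique
        · intro x
          have := x.isLt
          simp only [Sgen, Finset.range_zero, Finset.image_empty, Finset.sdiff_empty,
            Finset.mem_Icc]
          omega
        · intro a b hab
          simpa using hab
      simp only [wordProd, id_eq]
      exact congrArg lam (congrFun hfun t)
    · intro s h1 h2; omega
  | succ j ih =>
    intro hj hc
    have hjk : j < k := hj
    have hjn : j < n := lt_of_lt_of_le hjk hkn
    have hcj : (Sgen n k F j).card = n - j := Sgen_card n k F hmono hmem j (le_of_lt hjk)
    obtain ⟨ihA, ihB⟩ := ih (le_of_lt hjk) hcj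
    set a := F ⟨j, hjk⟩ with ha
    have hFFj : FFgen n k F j = a := by simp [FFgen, hjk, ha]
    have ha1 : j + 1 ≤ a := hFge ⟨j, hjk⟩
    have han : a ≤ n := (Finset.mem_Icc.mp (hmem ⟨j, hjk⟩)).2
    have hIj : I (j + 1) = a := hI ⟨j, hjk⟩
    -- a is in S j
    have haS : a ∈ Sgen n k F j := by
      simp only [Sgen, Finset.mem_sdiff, Finset.mem_image, Finset.mem_range, not_exists]
      refine ⟨hmem ⟨j, hjk⟩, ?_⟩
      rintro i ⟨hij, hFi⟩
      have hik : i < k := lt_trans hij hjk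
      rw [FFgen, dif_pos hik] at hFi
      have : F ⟨i, hik⟩ < a := hmono (by simpa using hij)
      omega
    -- the index of a in S j
    obtain ⟨b, hb⟩ : ∃ b : Fin (n - j), (Sgen n k F j).orderEmbOfFin hcj b = a := by
      have : a ∈ Set.range ⇑((Sgen n k F j).orderEmbOfFin hcj) := by
        rw [Finset.range_orderEmbOfFin]; exact haS
      exact this
    have hbval : b.val = a - j - 1 := by
      have hidx := orderEmb_index hcj b
      rw [hb] at hidx
      have hfil : (Sgen n k F j).filter (fun x => x < a)
          = (Finset.Icc 1 n).filter (fun x => x < a) \ (Finset.range j).image (FFgen n k F) := by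
        ext x
        simp only [Sgen, Finset.mem_filter, Finset.mem_sdiff]
        tauto
      have hsub2 : (Finset.range j).image (FFgen n k F)
          ⊆ (Finset.Icc 1 n).filter (fun x => x < a) := by
        intro x hx
        obtain ⟨i, hi, rfl⟩ := Finset.mem_image.mp hx
        have hij : i < j := Finset.mem_range.mp hi
        have hik : i < k := lt_trans hij hjk
        rw [FFgen, dif_pos hik]
        refine Finset.mem_filter.mpr ⟨hmem ⟨i, hik⟩, ?_⟩
        exact hmono (by simpa using hij)
      have hcard2 : ((Finset.range j).image (FFgen n k F)).card = j := by
        rw [Finset.card_image_of_injOn, Finset.card_range]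
        intro x hx y hy hxy
        simp only [Finset.coe_range, Set.mem_Iio] at hx hy
        have hxk : x < k := lt_trans hx hjk
        have hyk : y < k := lt_trans hy hjk
        simp only [FFgen, dif_pos hxk, dif_pos hyk] at hxy
        simpa using congrArg Fin.val (hmono.injective hxy)
      have hIccfil : (Finset.Icc 1 n).filter (fun x => x < a) = Finset.Icc 1 (a - 1) := by
        ext x
        simp only [Finset.mem_filter, Finset.mem_Icc]
        omega
      rw [hfil, Finset.card_sdiff_of_subset hsub2, hcard2, hIccfil, Nat.card_Icc] at hidx
      omega
    -- the skip map identifies S (j+1)'s enumeration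
    have hskip : ∀ t : Fin (n - (j + 1)),
        (if t.val < a - j - 1 then t.val else t.val + 1) < n - j := by
      intro t
      have := t.isLt
      split <;> omega
    have hDsucc : ∀ t : Fin (n - (j + 1)),
        (Sgen n k F (j + 1)).orderEmbOfFin hc t
          = (Sgen n k F j).orderEmbOfFin hcj
              ⟨if t.val < a - j - 1 then t.val else t.val + 1, hskip t⟩ := by
      have huniq := Finset.orderEmbOfFin_unique hc
        (f := fun t : Fin (n - (j + 1)) => (Sgen n k F j).orderEmbOfFin hcj
          ⟨if t.val < a - j - 1 then t.val else t.val + 1, hskip t⟩) ?_ ?_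
      · intro t; exact (congrFun huniq t).symm
      · intro t
        have hmem1 := Finset.orderEmbOfFin_mem (Sgen n k F j) hcj
          ⟨if t.val < a - j - 1 then t.val else t.val + 1, hskip t⟩
        have hne : (Sgen n k F j).orderEmbOfFin hcj
            ⟨if t.val < a - j - 1 then t.val else t.val + 1, hskip t⟩ ≠ a := by
          intro heq
          have heq2 : (⟨if t.val < a - j - 1 then t.val else t.val + 1, hskip t⟩ : Fin (n - j))
              = b := ((Sgen n k F j).orderEmbOfFin hcj).injective (heq.trans hb.symm)
          have heq3 := congrArg Fin.val heq2
          simp only at heq3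
          rw [hbval] at heq3
          have := t.isLt
          by_cases hlt : t.val < a - j - 1 <;> simp [hlt] at heq3 <;> omega
        simp only [Sgen, Finset.mem_sdiff, Finset.mem_image, Finset.mem_range,
          not_exists] at hmem1 ⊢
        obtain ⟨hicc, hnex⟩ := hmem1
        refine ⟨hicc, ?_⟩
        rintro i ⟨hij1, hFi⟩
        rcases Nat.lt_succ_iff_lt_or_eq.mp hij1 with h | h
        · exact hnex i ⟨h, hFi⟩
        · subst h
          rw [hFFj] at hFi
          first
          | exact hne hFi
          | exact hne hFi.symm
      · intro t t' htt'
        apply ((Sgen n k F j).orderEmbOfFin hcj).strictMono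
        simp only [Fin.mk_lt_mk]
        have h0 : t.val < t'.val := htt'
        split_ifs <;> omega
    -- now the computation
    have hword : wordProd I n (j + 1) lam
        = colStack (n - j) ((n - j) - (a - j)) (wordProd I n j lam) := by
      simp only [wordProd, hIj]
    have hm0 : (n - j) - (a - j) < n - j := by omega
    constructor
    · intro t
      have ht := t.isLt
      have hval := ihA ⟨if t.val < a - j - 1 then t.val else t.val + 1, hskip t⟩
      rw [hDsucc t, ← hval, hword, colStack_spec _ _ _ hm0]
      by_cases hlt : t.val < a - j - 1
      · rw [show ((⟨if t.val < a - j - 1 then t.val else t.val + 1, hskip t⟩ : Fin (n - j)) : ℕ)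
            = t.val by simp [hlt],
          if_neg (by omega), if_neg (by omega)]
      · rw [show ((⟨if t.val < a - j - 1 then t.val else t.val + 1, hskip t⟩ : Fin (n - j)) : ℕ)
            = t.val + 1 by simp [hlt],
          if_pos (by constructor <;> omega)]
    · intro s h1 h2
      rw [hword, colStack_spec _ _ _ hm0]
      rcases Nat.lt_or_ge s 2 with hs | hs
      · have hs1 : s = 1 := by omega
        subst hs1
        rw [if_neg (by omega), if_pos (by omega : n - (j + 1) + 1 = n - j)]
        have hval := ihA b
        rw [hb] at hval
        rw [show (n - j) - ((n - j) - (a - j)) = (b : ℕ) + 1 by omega, hval,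
          show j + 1 - 1 = j from rfl, hFFj]
      · rw [if_neg (by omega), if_neg (by omega)]
        have harg : n - (j + 1) + s = n - j + (s - 1) := by omega
        rw [harg, ihB (s - 1) (by omega) (by omega),
          show j + 1 - s = j - (s - 1) by omega]

/-- Let `w ∈ W^p` have LS word (digits at the 1-indexed positions `1, …, n`) with digit 1
exactly at positions `i_1 < ⋯ < i_k`.  Then the standard (signed permutation) action of `w`
on `λ = [λ_1, …, λ_n]` yields the `n`-tuple obtained by deleting the coordinates
`λ_{i_1}, …, λ_{i_k}`, keeping the remaining coordinates in order, and appending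
`-λ_{i_k}, -λ_{i_{k-1}}, …, -λ_{i_1}` at the end. -/
theorem ls_word_action (n k : ℕ) (hkn : k ≤ n) (d : ℕ → Bool) (lam : ℕ → ℂ)
    (hk : (((Finset.Icc 1 n).filter (fun p => d p = true)).card = k))
    (hz : (((Finset.Icc 1 n).filter (fun p => d p = false)).card = n - k))
    (I : ℕ → ℕ)
    (hI : ∀ j : Fin k,
      I (j.val + 1) = ((Finset.Icc 1 n).filter (fun p => d p = true)).orderEmbOfFin hk j) :
    (∀ t : Fin (n - k),
        wordProd I n k lam (t.val + 1)
          = lam (((Finset.Icc 1 n).filter (fun p => d p = false)).orderEmbOfFin hz t)) ∧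
    (∀ m : Fin k,
        wordProd I n k lam (n - k + m.val + 1)
          = -lam (((Finset.Icc 1 n).filter (fun p => d p = true)).orderEmbOfFin hk m.rev)) := by
  have hmono : StrictMono ⇑(((Finset.Icc 1 n).filter (fun p => d p = true)).orderEmbOfFin hk) :=
    (((Finset.Icc 1 n).filter (fun p => d p = true)).orderEmbOfFin hk).strictMono
  have hmem : ∀ i, (((Finset.Icc 1 n).filter (fun p => d p = true)).orderEmbOfFin hk) i
      ∈ Finset.Icc 1 n := by
    intro i
    exact (Finset.mem_filter.mp (Finset.orderEmbOfFin_mem _ hk i)).1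
  have hcard := Sgen_card n k _ hmono hmem k le_rfl
  obtain ⟨A, B⟩ := main_induction n k hkn _ lam hmono hmem I hI k le_rfl hcard
  have hSkZ : Sgen n k (⇑(((Finset.Icc 1 n).filter (fun p => d p = true)).orderEmbOfFin hk)) k
      = (Finset.Icc 1 n).filter (fun p => d p = false) := by
    ext x
    simp only [Sgen, Finset.mem_sdiff, Finset.mem_image, Finset.mem_range, not_exists,
      Finset.mem_filter]
    constructor
    · rintro ⟨hicc, hnex⟩
      refine ⟨hicc, ?_⟩
      by_contra hdx
      have hdx' : d x = true := by
        cases hdx0 : d x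
        · exact absurd hdx0 hdx
        · rfl
      have hxr : x ∈ Set.range ⇑(((Finset.Icc 1 n).filter (fun p => d p = true)).orderEmbOfFin hk) := by
        rw [Finset.range_orderEmbOfFin]
        exact Finset.mem_filter.mpr ⟨hicc, hdx'⟩
      obtain ⟨i, hi⟩ := hxr
      refine hnex i.val ⟨i.isLt, ?_⟩
      rw [FFgen, dif_pos i.isLt]
      simpa using hi
    · rintro ⟨hicc, hdx⟩
      refine ⟨hicc, ?_⟩
      rintro i ⟨hik, hFi⟩
      rw [FFgen, dif_pos hik] at hFi
      have hm2 := Finset.orderEmbOfFin_mem _ hk (⟨i, hik⟩ : Fin k)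
      rw [hFi, Finset.mem_filter] at hm2
      rw [hm2.2] at hdx
      exact absurd hdx (by simp)
  constructor
  · intro t
    rw [A t, orderEmbOfFin_congr hSkZ hcard hz t]
  · intro m
    have hmlt := m.isLt
    have hB := B (m.val + 1) (by omega) (by omega)
    rw [show n - k + m.val + 1 = n - k + (m.val + 1) from rfl, hB]
    have hmk : k - (m.val + 1) < k := by omega
    have hFF : FFgen n k (⇑(((Finset.Icc 1 n).filter (fun p => d p = true)).orderEmbOfFin hk))
          (k - (m.val + 1))
        = (((Finset.Icc 1 n).filter (fun p => d p = true)).orderEmbOfFin hk) m.rev := by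
      rw [FFgen, dif_pos hmk]
      congr 1
    rw [hFF]


end Stmt4
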